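/- Restricted to the invariant line x_1 = x_2 in the simplex, parametrized by z > 0 via (x_1,x_2,x_3) = (1/(z+2), 1/(z+2), z/(z+2)), the third component of the symmetric vector field satisfies F_3(1/(z+2), 1/(z+2), z/(z+2)) = −2·P_{a,β}(z) / ((1+2a)·(2 + z^β) · (z+2)). -/
import Mathlib


noncomputable def symF (a β : ℝ) (i : Fin 3) (x₁ x₂ x₃ : ℝ) : ℝ :=
  let S := x₁ ^ β + x₂ ^ β + x₃ ^ β
  match i with
  | 0 => (x₁ ^ β + a * (x₂ ^ β + x₃ ^ β)) / ((1 + 2 * a) * S) - x₁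
  | 1 => (x₂ ^ β + a * (x₁ ^ β + x₃ ^ β)) / ((1 + 2 * a) * S) - x₂
  | 2 => (x₃ ^ β + a * (x₁ ^ β + x₂ ^ β)) / ((1 + 2 * a) * S) - x₃

noncomputable def P (a β z : ℝ) : ℝ := a * z ^ (β + 1) - z ^ β + (1 + a) * z - 2 * a

theorem symF3_on_diagonal (a β z : ℝ) (ha : 0 < a) (hβ : 0 < β) (hz : 0 < z) :
    symF a β 2 (1 / (z + 2)) (1 / (z + 2)) (z / (z + 2))
      = -2 * P a β z / ((1 + 2 * a) * (2 + z ^ β) * (z + 2)) := by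
  have hz2 : (0:ℝ) < z + 2 := by linarith
  have hw : (0:ℝ) < (z + 2) ^ β := Real.rpow_pos_of_pos hz2 β
  have h1 : (1 / (z + 2)) ^ β = 1 / (z + 2) ^ β := by
    rw [Real.div_rpow zero_le_one hz2.le, Real.one_rpow]
  have h2 : (z / (z + 2)) ^ β = z ^ β / (z + 2) ^ β :=
    Real.div_rpow hz.le hz2.le β
  have hzb : (0:ℝ) < z ^ β := Real.rpow_pos_of_pos hz β
  have hP : z ^ (β + 1) = z ^ β * z := by
    rw [Real.rpow_add hz, Real.rpow_one]
  have hS : (0:ℝ) < 2 + z ^ β := by linarith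
  have h12a : (0:ℝ) < 1 + 2 * a := by linarith
  simp only [symF, P, h1, h2, hP]
  field_simp
  ring
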